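/- For every real number ω ≥ 0 one has: ‖T_t‖ ≤ e^{ωt} for all t ≥ 0 if and only if N′(0+) ≤ ω, where N′(0+) = lim_{ε→0+} ε^{-1}(N(ε) − N(0)) ∈ [0,+∞]. Consequently the constant ρ = inf{ω : ‖T_t‖ ≤ e^{ωt} for all t ≥ 0} equals N′(0+), and moreover N′(0+) ≥ limsup_{t→0+} t^{-1}(‖T_t‖ − 1). -/

import Mathlib

open MeasureTheory Filter Set

/-- For every real `ω ≥ 0`: `‖T t‖ ≤ e^{ωt}` for all `t ≥ 0` iff
`N′(0+) ≤ ω`, where `N′(0+) = lim_{ε→0+} ε⁻¹ (N ε − N 0) ∈ [0,∞]` (an extended real).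
Consequently `ρ = inf {ω : ‖T t‖ ≤ e^{ωt} ∀ t ≥ 0}` equals `N′(0+)`, and moreover
`N′(0+) ≥ limsup_{t→0+} t⁻¹ (‖T t‖ − 1)`.  Here `N = exp ν` is the upper log-concave
envelope of `t ↦ ‖T t‖` and `ω₀ = 0`. -/
theorem stmt_2
    {B D : Type*} [NormedAddCommGroup B] [NormedSpace ℂ B] [CompleteSpace B]
    [NormedAddCommGroup D] [NormedSpace ℂ D] [CompleteSpace D]
    (T : ℝ → (D →L[ℂ] B))
    (hT0 : ‖T 0‖ = 1)
    (hcont : ∀ f : D, ContinuousOn (fun t => T t f) (Set.Ici (0:ℝ)))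
    (Mb ωb : ℝ) (hbound : ∀ t : ℝ, 0 ≤ t → ‖T t‖ ≤ Mb * Real.exp (ωb * t))
    (hω₀ : Filter.limsup (fun t : ℝ => ((Real.log ‖T t‖ / t : ℝ) : EReal)) Filter.atTop = 0)
    (ν : ℝ → ℝ)
    (hν_concave : ConcaveOn ℝ (Set.Ici (0:ℝ)) ν)
    (hν_ge : ∀ t : ℝ, 0 ≤ t → Real.log ‖T t‖ ≤ ν t)
    (hν_min : ∀ κ : ℝ → ℝ, ConcaveOn ℝ (Set.Ici (0:ℝ)) κ →
        (∀ t : ℝ, 0 ≤ t → Real.log ‖T t‖ ≤ κ t) → ∀ t : ℝ, 0 ≤ t → ν t ≤ κ t)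
    (Np : EReal)
    (hNp : Filter.Tendsto
      (fun ε : ℝ => ((ε⁻¹ * (Real.exp (ν ε) - Real.exp (ν 0)) : ℝ) : EReal))
      (nhdsWithin 0 (Set.Ioi 0)) (nhds Np)) :
    (∀ ω : ℝ, 0 ≤ ω →
      ((∀ t : ℝ, 0 ≤ t → ‖T t‖ ≤ Real.exp (ω * t)) ↔ Np ≤ (ω : EReal))) ∧
    Filter.limsup (fun t : ℝ => ((t⁻¹ * (‖T t‖ - 1) : ℝ) : EReal))
        (nhdsWithin 0 (Set.Ioi 0)) ≤ Np := by
  -- ν 0 ≥ 0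
  have h00 : (0:ℝ) ≤ ν 0 := by
    have := hν_ge 0 le_rfl
    simpa [hT0] using this
  -- ν 0 = 0
  have hν0 : ν 0 = 0 := by
    refine le_antisymm ?_ h00
    have hκle : ∀ t : ℝ, (if t = 0 then 0 else ν t) ≤ ν t := by
      intro t; by_cases h : t = 0 <;> simp [h, h00]
    have hκcon : ConcaveOn ℝ (Set.Ici (0:ℝ)) (fun t => if t = 0 then 0 else ν t) := by
      refine ⟨convex_Ici 0, ?_⟩
      intro x hx y hy a b ha hb hab
      simp only [smul_eq_mul]
      by_cases hz : a * x + b * y = 0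
      · have hax : a * x = 0 := by nlinarith [mul_nonneg ha hx, mul_nonneg hb hy]
        have hby : b * y = 0 := by nlinarith [mul_nonneg ha hx, mul_nonneg hb hy]
        have h1 : a * (if x = 0 then 0 else ν x) = 0 := by
          rcases mul_eq_zero.1 hax with h | h <;> simp [h]
        have h2 : b * (if y = 0 then 0 else ν y) = 0 := by
          rcases mul_eq_zero.1 hby with h | h <;> simp [h]
        rw [hz, h1, h2]; simp
      · have hcc := hν_concave.2 hx hy ha hb hab
        simp only [smul_eq_mul] at hcc
        rw [if_neg hz]
        calc a * (if x = 0 then 0 else ν x) + b * (if y = 0 then 0 else ν y)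
            ≤ a * ν x + b * ν y := by gcongr <;> [exact hκle x; exact hκle y]
          _ ≤ ν (a * x + b * y) := hcc
    have hκmaj : ∀ t : ℝ, 0 ≤ t → Real.log ‖T t‖ ≤ (if t = 0 then 0 else ν t) := by
      intro t ht
      by_cases h : t = 0
      · simp [h, hT0]
      · simpa [h] using hν_ge t ht
    simpa using hν_min _ hκcon hκmaj 0 le_rfl
  -- slope inequality from concavity
  have hslope : ∀ t : ℝ, 0 < t → ∀ ε : ℝ, 0 < ε → ε ≤ t → ε * (ν t / t) ≤ ν ε := by
    intro t ht ε hε hεt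
    have h1 : (1 - ε / t) + ε / t = 1 := by ring
    have ha : 0 ≤ 1 - ε / t := by
      have : ε / t ≤ 1 := (div_le_one ht).2 hεt
      linarith
    have hb : 0 ≤ ε / t := div_nonneg hε.le ht.le
    have := hν_concave.2 (self_mem_Ici) (mem_Ici.2 ht.le) ha hb h1
    simp only [smul_eq_mul, mul_zero, zero_add, hν0, mul_zero, zero_add] at this
    have hεeq : ε / t * t = ε := div_mul_cancel₀ ε ht.ne'
    rw [hεeq] at this
    calc ε * (ν t / t) = ε / t * ν t := by ring
      _ ≤ ν ε := this
  -- ‖T t‖ ≤ exp (ν t) for t ≥ 0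
  have hTN : ∀ t : ℝ, 0 ≤ t → ‖T t‖ ≤ Real.exp (ν t) := by
    intro t ht
    rcases (eq_or_lt_of_le (norm_nonneg (T t))).imp Eq.symm id with h | h
    · rw [h]; exact (Real.exp_pos _).le
    · rw [← Real.exp_log h]
      exact Real.exp_le_exp.2 (hν_ge t ht)
  constructor
  · intro ω hω
    constructor
    · -- forward direction
      intro hb
      -- ν t ≤ ω t
      have hκcon : ConcaveOn ℝ (Set.Ici (0:ℝ)) (fun t => ω * t) := by
        refine ⟨convex_Ici 0, ?_⟩
        intro x _ y _ a b _ _ _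
        simp only [smul_eq_mul]
        apply le_of_eq; ring
      have hκmaj : ∀ t : ℝ, 0 ≤ t → Real.log ‖T t‖ ≤ ω * t := by
        intro t ht
        rcases (eq_or_lt_of_le (norm_nonneg (T t))).imp Eq.symm id with h | h
        · rw [h, Real.log_zero]; exact mul_nonneg hω ht
        · calc Real.log ‖T t‖ ≤ Real.log (Real.exp (ω * t)) :=
                Real.log_le_log h (hb t ht)
            _ = ω * t := Real.log_exp _
      have hνle : ∀ t : ℝ, 0 ≤ t → ν t ≤ ω * t := hν_min _ hκcon hκmaj
      -- comparison function tending to ω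
      have hder : HasDerivAt (fun x : ℝ => Real.exp (ω * x)) ω 0 := by
        have h1 : HasDerivAt (fun x : ℝ => ω * x) ω 0 := by
          simpa using (hasDerivAt_id (0:ℝ)).const_mul ω
        simpa using h1.exp
      have hreal : Tendsto (fun ε : ℝ => ε⁻¹ * (Real.exp (ω * ε) - 1))
          (nhdsWithin 0 (Set.Ioi 0)) (nhds ω) := by
        have := hasDerivAt_iff_tendsto_slope.1 hder
        have h2 := this.mono_left (nhdsWithin_mono 0 (fun x hx => (ne_of_gt hx : x ≠ 0)))
        refine h2.congr (fun ε => ?_)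
        simp [slope_def_field, div_eq_inv_mul]
      have hg : Tendsto (fun ε : ℝ => ((ε⁻¹ * (Real.exp (ω * ε) - 1) : ℝ) : EReal))
          (nhdsWithin 0 (Set.Ioi 0)) (nhds (ω : EReal)) :=
        (continuous_coe_real_ereal.tendsto ω).comp hreal
      have hev : (fun ε : ℝ => ((ε⁻¹ * (Real.exp (ν ε) - Real.exp (ν 0)) : ℝ) : EReal)) ≤ᶠ[nhdsWithin 0 (Set.Ioi 0)]
          (fun ε : ℝ => ((ε⁻¹ * (Real.exp (ω * ε) - 1) : ℝ) : EReal)) := by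
        filter_upwards [self_mem_nhdsWithin] with ε hε
        rw [EReal.coe_le_coe_iff]
        rw [hν0, Real.exp_zero]
        gcongr
        · exact inv_nonneg.2 (le_of_lt hε)
        · exact hνle ε (le_of_lt hε)
      exact le_of_tendsto_of_tendsto hNp hg hev
    · -- backward direction
      intro hNpω t ht
      rcases ht.eq_or_lt with h | h
      · simp [← h, hT0]
      · by_contra hc
        push_neg at hc
        have hlog : ω * t < Real.log ‖T t‖ := by
          have := Real.log_lt_log (Real.exp_pos _) hc
          rwa [Real.log_exp] at this
        set c : ℝ := ν t / t with hcdef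
        have hωc : ω < c := by
          rw [hcdef, lt_div_iff₀ h]
          exact lt_of_lt_of_le hlog (hν_ge t ht)
        have hev : ∀ᶠ ε in nhdsWithin 0 (Set.Ioi 0),
            (c : EReal) ≤ ((ε⁻¹ * (Real.exp (ν ε) - Real.exp (ν 0)) : ℝ) : EReal) := by
          filter_upwards [Ioc_mem_nhdsGT_of_mem (show (0:ℝ) ∈ Set.Ico 0 t from ⟨le_rfl, h⟩)]
            with ε hε
          rw [EReal.coe_le_coe_iff, hν0, Real.exp_zero]
          have h1 : ε * c ≤ ν ε := hslope t h ε hε.1 hε.2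
          have h2 : ε * c + 1 ≤ Real.exp (ν ε) :=
            le_trans (by linarith [Real.add_one_le_exp (ε * c)]) (Real.exp_le_exp.2 h1)
          have h3 : ε * c ≤ Real.exp (ν ε) - 1 := by linarith
          calc c = ε⁻¹ * (ε * c) := (inv_mul_cancel_left₀ hε.1.ne' c).symm
            _ ≤ ε⁻¹ * (Real.exp (ν ε) - 1) := by
                gcongr; exact inv_nonneg.2 hε.1.le
        have : (c : EReal) ≤ Np := ge_of_tendsto hNp hev
        have : (c : EReal) ≤ (ω : EReal) := le_trans this hNpω
        exact absurd (EReal.coe_le_coe_iff.1 this) (not_le.2 hωc)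
  · -- limsup part
    have hev : (fun t : ℝ => ((t⁻¹ * (‖T t‖ - 1) : ℝ) : EReal)) ≤ᶠ[nhdsWithin 0 (Set.Ioi 0)]
        (fun ε : ℝ => ((ε⁻¹ * (Real.exp (ν ε) - Real.exp (ν 0)) : ℝ) : EReal)) := by
      filter_upwards [self_mem_nhdsWithin] with t ht
      rw [EReal.coe_le_coe_iff, hν0, Real.exp_zero]
      gcongr
      · exact inv_nonneg.2 (le_of_lt ht)
      · exact hTN t (le_of_lt ht)
    calc Filter.limsup (fun t : ℝ => ((t⁻¹ * (‖T t‖ - 1) : ℝ) : EReal))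
          (nhdsWithin 0 (Set.Ioi 0))
        ≤ Filter.limsup (fun ε : ℝ => ((ε⁻¹ * (Real.exp (ν ε) - Real.exp (ν 0)) : ℝ) : EReal))
          (nhdsWithin 0 (Set.Ioi 0)) := Filter.limsup_le_limsup hev
      _ = Np := hNp.limsup_eq
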